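/- Collapse of the polymatroid bound to a modular bound under acyclic degree constraints: Let DC be a set of degree constraints over [n] such that the identity order (1,…,n) is compatible with DC, i.e., for every (X, Y, N_{Y|X}) ∈ DC and every x ∈ X, y ∈ Y∖X, we have x < y. Let h* be any polymatroid on [n] with h*(Y) − h*(X) ≤ log₂ N_{Y|X} for all (X, Y, N_{Y|X}) ∈ DC. Define the modular set function f by f(S) = ∑_{i∈S} ( h*([i]) − h*([i−1]) ), where [i] = {1,…,i} and [0] = ∅. Then f is a nonnegative modular set function with f(∅) = 0, f satisfies all the constraints (f(Y) − f(X) ≤ log₂ N_{Y|X} for every (X, Y, N_{Y|X}) ∈ DC), and f([n]) = h*([n]). Consequently, the maximum of h([n]) over modular functions satisfying the constraints equals the maximum over polymatroids satisfying the constraints. -/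

import Mathlib

open Finset

/-- A polymatroid on `[n]`: a nonnegative set function with `h ∅ = 0` that is
monotone and submodular. -/
def IsPolymatroid {n : ℕ} (h : Finset (Fin n) → ℝ) : Prop :=
  h ∅ = 0 ∧ (∀ S, 0 ≤ h S) ∧ (∀ X Y, X ⊆ Y → h X ≤ h Y) ∧
    (∀ X Y, h (X ∪ Y) + h (X ∩ Y) ≤ h X + h Y)

/-- A modular set function: `f S = ∑_{i ∈ S} f {i}`. -/
def IsModular {n : ℕ} (f : Finset (Fin n) → ℝ) : Prop :=
  ∀ S : Finset (Fin n), f S = ∑ i ∈ S, f {i}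

/-- The modular function obtained from `h` along the identity variable order:
`f S = ∑_{i ∈ S} (h([i]) − h([i−1]))`, where `[i] = {1,…,i}`. -/
noncomputable def modf {n : ℕ} (h : Finset (Fin n) → ℝ) (S : Finset (Fin n)) : ℝ :=
  ∑ i ∈ S, (h (Finset.Iic i) - h (Finset.Iio i))

lemma sub_step {n : ℕ} {h : Finset (Fin n) → ℝ}
    (hsub : ∀ X Y, h (X ∪ Y) + h (X ∩ Y) ≤ h X + h Y)
    {A B : Finset (Fin n)} {a : Fin n} (hAB : A ⊆ B) (ha : a ∉ B) :
    h (insert a B) - h B ≤ h (insert a A) - h A := by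
  have := hsub (insert a A) B
  have h1 : insert a A ∪ B = insert a B := by
    ext x; simp only [mem_union, mem_insert]
    constructor
    · rintro (⟨rfl | hx⟩ | hx) <;> simp_all [hAB _, Or.inr]
    · rintro (rfl | hx) <;> tauto
  have h2 : insert a A ∩ B = A := by
    ext x; simp only [mem_inter, mem_insert]
    constructor
    · rintro ⟨rfl | hx, hB⟩
      · exact absurd hB ha
      · exact hx
    · intro hx; exact ⟨Or.inr hx, hAB hx⟩
  rw [h1, h2] at this
  linarith

lemma key {n : ℕ} {h : Finset (Fin n) → ℝ} (hpoly : IsPolymatroid h) :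
    ∀ (D X : Finset (Fin n)), (∀ i ∈ D, ∀ x ∈ X, x < i) →
      ∑ i ∈ D, (h (Finset.Iic i) - h (Finset.Iio i)) ≤ h (X ∪ D) - h X := by
  obtain ⟨h0, hnn, hmono, hsub⟩ := hpoly
  intro D
  induction D using Finset.induction_on_max with
  | empty => intro X _; simp
  | insert a s hs ih =>
    intro X hX
    have hans : a ∉ s := fun hm => lt_irrefl a (hs a hm)
    rw [Finset.sum_insert hans]
    have hIH := ih X (fun i hi x hx => hX i (mem_insert_of_mem hi) x hx)
    have hsubset : X ∪ s ⊆ Finset.Iio a := by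
      intro x hx
      rw [Finset.mem_Iio]
      rcases mem_union.mp hx with hx | hx
      · exact hX a (mem_insert_self a s) x hx
      · exact hs x hx
    have hnotin : a ∉ Finset.Iio a := by simp
    have hstep : h (insert a (Finset.Iio a)) - h (Finset.Iio a)
        ≤ h (insert a (X ∪ s)) - h (X ∪ s) := sub_step hsub hsubset hnotin
    rw [Finset.Iio_insert] at hstep
    have heq : X ∪ insert a s = insert a (X ∪ s) := Finset.union_insert a X s
    rw [heq]
    linarith

lemma modf_nonneg {n : ℕ} {h : Finset (Fin n) → ℝ} (hpoly : IsPolymatroid h)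
    (S : Finset (Fin n)) : 0 ≤ modf h S := by
  apply Finset.sum_nonneg
  intro i _
  have := hpoly.2.2.1 (Finset.Iio i) (Finset.Iic i) Finset.Iio_subset_Iic_self
  linarith

lemma modf_constraint {n : ℕ} {h : Finset (Fin n) → ℝ} (hpoly : IsPolymatroid h)
    {X Y : Finset (Fin n)} (hXY : X ⊆ Y) (hc : ∀ x ∈ X, ∀ y ∈ Y \ X, x < y) :
    modf h Y - modf h X ≤ h Y - h X := by
  have hsd : ∑ i ∈ Y \ X, (h (Finset.Iic i) - h (Finset.Iio i))
      + ∑ i ∈ X, (h (Finset.Iic i) - h (Finset.Iio i))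
      = ∑ i ∈ Y, (h (Finset.Iic i) - h (Finset.Iio i)) := Finset.sum_sdiff hXY
  have hk := key hpoly (Y \ X) X (fun i hi x hx => hc x hx i hi)
  rw [Finset.union_sdiff_of_subset hXY] at hk
  unfold modf
  linarith

lemma modf_univ {n : ℕ} {h : Finset (Fin n) → ℝ} (hpoly : IsPolymatroid h) :
    modf h Finset.univ = h Finset.univ := by
  have key1 : ∀ i : Fin n, Finset.Iic i = Finset.univ.filter (fun j : Fin n => j.val < i.val + 1) := by
    intro i; ext j; simp only [Finset.mem_Iic, Finset.mem_filter, Finset.mem_univ, true_and, Fin.le_def, Nat.lt_succ_iff]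
  have key2 : ∀ i : Fin n, Finset.Iio i = Finset.univ.filter (fun j : Fin n => j.val < i.val) := by
    intro i; ext j; simp only [Finset.mem_Iio, Finset.mem_filter, Finset.mem_univ, true_and, Fin.lt_def]
  set g : ℕ → ℝ := fun k => h (Finset.univ.filter (fun j : Fin n => j.val < k)) with hg
  have : modf h Finset.univ = ∑ i : Fin n, (g (i.val + 1) - g i.val) := by
    unfold modf
    apply Finset.sum_congr rfl
    intro i _
    rw [key1 i, key2 i]
  rw [this]
  have := Fin.sum_univ_eq_sum_range (fun k => g (k + 1) - g k) n
  rw [this, Finset.sum_range_sub g n]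
  have hfn : (Finset.univ.filter (fun j : Fin n => j.val < n)) = (Finset.univ : Finset (Fin n)) := by
    ext j; simp [j.isLt]
  have hgn : g n = h Finset.univ := by rw [hg]; simp only [hfn]
  have hg0 : g 0 = 0 := by
    have : (Finset.univ.filter (fun j : Fin n => j.val < 0)) = (∅ : Finset (Fin n)) := by
      ext j; simp
    rw [hg]; simp only [this]; exact hpoly.1
  rw [hgn, hg0, sub_zero]

lemma modular_is_poly {n : ℕ} {f : Finset (Fin n) → ℝ} (hmod : IsModular f)
    (hnn : ∀ S, 0 ≤ f S) (h0 : f ∅ = 0) : IsPolymatroid f := by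
  refine ⟨h0, hnn, ?_, ?_⟩
  · intro X Y hXY
    rw [hmod X, hmod Y]
    exact Finset.sum_le_sum_of_subset_of_nonneg hXY (fun i _ _ => hnn {i})
  · intro X Y
    rw [hmod (X ∪ Y), hmod (X ∩ Y), hmod X, hmod Y, Finset.sum_union_inter]

theorem collapse_to_modular
    {n : ℕ} (DC : Finset (Finset (Fin n) × Finset (Fin n) × ℕ))
    (hDCvalid : ∀ c ∈ DC, c.1 ⊂ c.2.1 ∧ 1 ≤ c.2.2)
    (hcompat : ∀ c ∈ DC, ∀ x ∈ c.1, ∀ y ∈ c.2.1 \ c.1, x < y)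
    (h : Finset (Fin n) → ℝ) (hpoly : IsPolymatroid h)
    (hsat : ∀ c ∈ DC, h c.2.1 - h c.1 ≤ Real.logb 2 (c.2.2 : ℝ)) :
    (∀ S, 0 ≤ modf h S) ∧
    modf h ∅ = 0 ∧
    IsModular (modf h) ∧
    (∀ c ∈ DC, modf h c.2.1 - modf h c.1 ≤ Real.logb 2 (c.2.2 : ℝ)) ∧
    modf h Finset.univ = h Finset.univ ∧
    sSup {x : ℝ | ∃ f : Finset (Fin n) → ℝ, IsModular f ∧ (∀ S, 0 ≤ f S) ∧ f ∅ = 0 ∧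
        (∀ c ∈ DC, f c.2.1 - f c.1 ≤ Real.logb 2 (c.2.2 : ℝ)) ∧ x = f Finset.univ}
      = sSup {x : ℝ | ∃ g : Finset (Fin n) → ℝ, IsPolymatroid g ∧
        (∀ c ∈ DC, g c.2.1 - g c.1 ≤ Real.logb 2 (c.2.2 : ℝ)) ∧ x = g Finset.univ} := by
  have hconstraints : ∀ (g : Finset (Fin n) → ℝ), IsPolymatroid g →
      (∀ c ∈ DC, g c.2.1 - g c.1 ≤ Real.logb 2 (c.2.2 : ℝ)) →
      ∀ c ∈ DC, modf g c.2.1 - modf g c.1 ≤ Real.logb 2 (c.2.2 : ℝ) := by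
    intro g hg hgs c hc
    have h1 := modf_constraint hg (hDCvalid c hc).1.subset (hcompat c hc)
    linarith [hgs c hc]
  refine ⟨modf_nonneg hpoly, by simp [modf], ?_, hconstraints h hpoly hsat, modf_univ hpoly, ?_⟩
  · intro S
    unfold modf
    apply Finset.sum_congr rfl
    intro i _
    rw [Finset.sum_singleton]
  · congr 1
    ext x
    simp only [Set.mem_setOf_eq]
    constructor
    · rintro ⟨f, hmod, hnn, h0, hcs, rfl⟩
      exact ⟨f, modular_is_poly hmod hnn h0, hcs, rfl⟩
    · rintro ⟨g, hg, hcs, rfl⟩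
      refine ⟨modf g, ?_, modf_nonneg hg, by simp [modf], hconstraints g hg hcs,
        (modf_univ hg).symm⟩
      intro S
      unfold modf
      exact Finset.sum_congr rfl (fun i _ => by rw [Finset.sum_singleton])
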